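/- Let K > 0, set V = Real.sqrt (1+K), and for ε > 0 let c = V + ε and μ₄(ε) = Real.sqrt((2·V·ε + ε²)/(1 + 2·V·ε + ε²)). Then: (a) 0 < μ₄(ε) < 1 and (c² − K)·(1 − μ₄(ε)²) = 1, equivalently c = Real.sqrt(1/(1−μ₄(ε)²) + K), so that μ₄(ε)·(c − Real.sqrt(1/(1−μ₄(ε)²) + K)) = 0 and μ₄(ε) is the positive root of the characteristic quartic at spectral parameter λ = 0; and (b) there exist C > 0 and ε₀ > 0 such that for all ε ∈ (0, ε₀), |μ₄(ε) − Real.sqrt(2·V·ε)·(1 − ((3+4K)/(4V))·ε)| ≤ C·ε²·Real.sqrt ε. -/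

import Mathlib

set_option maxHeartbeats 1600000


/-- Exact value and small-`ε` asymptotics of the positive spatial eigenvalue
`μ₄(0,ε) = √((2Vε+ε²)/(1+2Vε+ε²))` at spectral parameter `λ = 0`, for the linearized
Euler–Poisson system with soliton speed `c = V + ε`, `V = √(1+K)`:
(a) `0 < μ₄ < 1`, `(c²−K)(1−μ₄²) = 1`, `c = √(1/(1−μ₄²)+K)`, so `d₋(μ₄) = 0`;
(b) `μ₄(ε) = √(2Vε)·(1 − (3+4K)/(4V)·ε) + O(ε^{5/2})` as `ε → 0⁺`. -/
theorem mu4_at_zero_value_and_asymptotics (K : ℝ) (hK : 0 < K)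
    (V : ℝ) (hV : V = Real.sqrt (1 + K))
    (μ₄ : ℝ → ℝ)
    (hμ : ∀ ε : ℝ, μ₄ ε = Real.sqrt ((2 * V * ε + ε ^ 2) / (1 + 2 * V * ε + ε ^ 2))) :
    (∀ ε : ℝ, 0 < ε →
      (0 < μ₄ ε ∧ μ₄ ε < 1) ∧
      ((V + ε) ^ 2 - K) * (1 - (μ₄ ε) ^ 2) = 1 ∧
      V + ε = Real.sqrt (1 / (1 - (μ₄ ε) ^ 2) + K) ∧
      μ₄ ε * ((V + ε) - Real.sqrt (1 / (1 - (μ₄ ε) ^ 2) + K)) = 0) ∧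
    ∃ C : ℝ, 0 < C ∧ ∃ ε₀ : ℝ, 0 < ε₀ ∧ ∀ ε : ℝ, 0 < ε → ε < ε₀ →
      |μ₄ ε - Real.sqrt (2 * V * ε) * (1 - ((3 + 4 * K) / (4 * V)) * ε)|
        ≤ C * ε ^ 2 * Real.sqrt ε := by
  have hV2 : V ^ 2 = 1 + K := by
    rw [hV, Real.sq_sqrt (by linarith)]
  have hV1 : 1 < V := by
    nlinarith [Real.sqrt_nonneg (1 + K), hV2]
  have hV0 : 0 < V := by linarith
  -- part (a) facts, reusable
  have main : ∀ ε : ℝ, 0 < ε →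
      (0 < μ₄ ε ∧ μ₄ ε < 1) ∧
      (μ₄ ε) ^ 2 = (2 * V * ε + ε ^ 2) / (1 + 2 * V * ε + ε ^ 2) := by
    intro ε hε
    have hD : (0:ℝ) < 1 + 2 * V * ε + ε ^ 2 := by nlinarith
    have hN : (0:ℝ) < 2 * V * ε + ε ^ 2 := by nlinarith
    have hfr : (0:ℝ) < (2 * V * ε + ε ^ 2) / (1 + 2 * V * ε + ε ^ 2) := div_pos hN hD
    have hfr1 : (2 * V * ε + ε ^ 2) / (1 + 2 * V * ε + ε ^ 2) < 1 :=
      (div_lt_one hD).mpr (by linarith)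
    refine ⟨⟨?_, ?_⟩, ?_⟩
    · rw [hμ ε]; exact Real.sqrt_pos.mpr hfr
    · rw [hμ ε]
      calc Real.sqrt ((2 * V * ε + ε ^ 2) / (1 + 2 * V * ε + ε ^ 2))
          < Real.sqrt 1 := Real.sqrt_lt_sqrt hfr.le hfr1
        _ = 1 := Real.sqrt_one
    · rw [hμ ε]; exact Real.sq_sqrt hfr.le
  constructor
  · intro ε hε
    obtain ⟨⟨hp, hl1⟩, hsq⟩ := main ε hε
    have hD : (0:ℝ) < 1 + 2 * V * ε + ε ^ 2 := by nlinarith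
    have h1m : 1 - (μ₄ ε) ^ 2 = 1 / (1 + 2 * V * ε + ε ^ 2) := by
      rw [hsq]; field_simp; ring
    have hDK : (V + ε) ^ 2 - K = 1 + 2 * V * ε + ε ^ 2 := by nlinarith [hV2]
    have hkey : ((V + ε) ^ 2 - K) * (1 - (μ₄ ε) ^ 2) = 1 := by
      rw [h1m, hDK]; field_simp
    have hinside : 1 / (1 - (μ₄ ε) ^ 2) + K = (V + ε) ^ 2 := by
      rw [h1m]; rw [one_div_one_div]; linarith [hDK]
    have hc : V + ε = Real.sqrt (1 / (1 - (μ₄ ε) ^ 2) + K) := by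
      rw [hinside, Real.sqrt_sq (by linarith)]
    exact ⟨⟨hp, hl1⟩, hkey, hc, by rw [← hc]; ring⟩
  · -- asymptotics
    set a : ℝ := (3 + 4 * K) / (4 * V) with ha_def
    have ha : 0 < a := div_pos (by linarith) (by linarith)
    have h4aV : 4 * a * V = 3 + 4 * K := by
      rw [ha_def]; field_simp
    set B : ℝ := |1 - 4 * a * V + a ^ 2| + 2 * a ^ 2 * V + 2 * a + a ^ 2 with hB_def
    have hB : 0 < B := by positivity
    refine ⟨2 * V * B + 1, by positivity, 1 / (8 * V + 2 * a + 1), by positivity, ?_⟩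
    intro ε hε hεlt
    have hεb : ε * (8 * V + 2 * a + 1) < 1 := by
      rw [div_eq_inv_mul, mul_one] at hεlt
      calc ε * (8 * V + 2 * a + 1) < (8 * V + 2 * a + 1)⁻¹ * (8 * V + 2 * a + 1) := by
            apply mul_lt_mul_of_pos_right hεlt (by positivity)
        _ = 1 := inv_mul_cancel₀ (by positivity)
    have hε1 : ε < 1 := by nlinarith
    have hε8 : 8 * V * ε < 1 := by nlinarith
    have hεa : 2 * a * ε < 1 := by nlinarith
    obtain ⟨⟨hp, hl1⟩, hsq⟩ := main ε hε
    have hD : (0:ℝ) < 1 + 2 * V * ε + ε ^ 2 := by nlinarith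
    have hD1 : (1:ℝ) ≤ 1 + 2 * V * ε + ε ^ 2 := by nlinarith
    set x := μ₄ ε with hx_def
    set y := Real.sqrt (2 * V * ε) * (1 - a * ε) with hy_def
    have hy2 : y ^ 2 = 2 * V * ε * (1 - a * ε) ^ 2 := by
      rw [hy_def, mul_pow, Real.sq_sqrt (by positivity)]
    have hy0 : 0 ≤ y := by
      apply mul_nonneg (Real.sqrt_nonneg _); nlinarith
    -- lower bound x ≥ √ε
    have hsε : (0:ℝ) < Real.sqrt ε := Real.sqrt_pos.mpr hε
    have hsεsq : Real.sqrt ε ^ 2 = ε := Real.sq_sqrt hε.le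
    have hxlb : Real.sqrt ε ≤ x := by
      have h2V : 2 * ε ≤ 2 * V * ε := by nlinarith
      have h2Ve : 8 * V * ε * ε ≤ ε := by nlinarith
      have hcube : ε ^ 3 ≤ ε ^ 2 := by nlinarith
      have hle : ε * (1 + 2 * V * ε + ε ^ 2) ≤ 2 * V * ε + ε ^ 2 := by nlinarith
      rw [hx_def, hμ ε]
      apply Real.sqrt_le_sqrt
      rw [le_div_iff₀ hD]
      exact hle
    -- key: |x - y| * (x + y) = |x^2 - y^2|
    have hxy : 0 < x + y := by linarith
    have habs : |x - y| * (x + y) = |x ^ 2 - y ^ 2| := by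
      rw [← abs_of_pos hxy, ← abs_mul]
      congr 1; ring
    -- bound on |x^2 - y^2|
    have hεle2 : ε ^ 2 ≤ 1 := by nlinarith
    have hε32 : ε ^ 3 ≤ ε ^ 2 := by nlinarith
    have hε42 : ε ^ 4 ≤ ε ^ 2 := by nlinarith [sq_nonneg ε, sq_nonneg (ε^2)]
    have hnum : (x ^ 2 - y ^ 2) * (1 + 2 * V * ε + ε ^ 2) =
        -(2 * V * ε) * ((1 - 4 * a * V + a ^ 2) * ε ^ 2 + (2 * a ^ 2 * V - 2 * a) * ε ^ 3
          + a ^ 2 * ε ^ 4) := by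
      have hx2D : x ^ 2 * (1 + 2 * V * ε + ε ^ 2) = 2 * V * ε + ε ^ 2 := by
        rw [hsq, div_mul_cancel₀ _ hD.ne']
      linear_combination hx2D - (1 + 2 * V * ε + ε ^ 2) * hy2 + ε ^ 2 * h4aV
        - 4 * ε ^ 2 * hV2
    have hNbound : |(1 - 4 * a * V + a ^ 2) * ε ^ 2 + (2 * a ^ 2 * V - 2 * a) * ε ^ 3
        + a ^ 2 * ε ^ 4| ≤ B * ε ^ 2 := by
      have h1 : |(1 - 4 * a * V + a ^ 2) * ε ^ 2| = |1 - 4 * a * V + a ^ 2| * ε ^ 2 := by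
        rw [abs_mul, abs_of_nonneg (by positivity : (0:ℝ) ≤ ε ^ 2)]
      have h2 : |(2 * a ^ 2 * V - 2 * a) * ε ^ 3| ≤ (2 * a ^ 2 * V + 2 * a) * ε ^ 2 := by
        rw [abs_mul, abs_of_nonneg (by positivity : (0:ℝ) ≤ ε ^ 3)]
        have hb : |2 * a ^ 2 * V - 2 * a| ≤ 2 * a ^ 2 * V + 2 * a := by
          apply abs_sub_le_of_nonneg_of_le <;> nlinarith
        calc |2 * a ^ 2 * V - 2 * a| * ε ^ 3
            ≤ (2 * a ^ 2 * V + 2 * a) * ε ^ 3 := by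
              apply mul_le_mul_of_nonneg_right hb (by positivity)
          _ ≤ (2 * a ^ 2 * V + 2 * a) * ε ^ 2 := by
              apply mul_le_mul_of_nonneg_left hε32 (by positivity)
      have h3 : |a ^ 2 * ε ^ 4| ≤ a ^ 2 * ε ^ 2 := by
        rw [abs_mul, abs_of_nonneg (by positivity : (0:ℝ) ≤ ε ^ 4),
          abs_of_nonneg (by positivity : (0:ℝ) ≤ a ^ 2)]
        exact mul_le_mul_of_nonneg_left hε42 (by positivity)
      calc |(1 - 4 * a * V + a ^ 2) * ε ^ 2 + (2 * a ^ 2 * V - 2 * a) * ε ^ 3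
            + a ^ 2 * ε ^ 4|
          ≤ |(1 - 4 * a * V + a ^ 2) * ε ^ 2| + |(2 * a ^ 2 * V - 2 * a) * ε ^ 3|
            + |a ^ 2 * ε ^ 4| := by
            apply (abs_add_le _ _).trans; gcongr; exact abs_add_le _ _
        _ ≤ B * ε ^ 2 := by rw [h1, hB_def]; nlinarith
    have hNabs : |-(2 * V * ε) * ((1 - 4 * a * V + a ^ 2) * ε ^ 2
        + (2 * a ^ 2 * V - 2 * a) * ε ^ 3 + a ^ 2 * ε ^ 4)| ≤ 2 * V * B * ε ^ 3 := by
      rw [abs_mul, abs_neg, abs_of_nonneg (by positivity : (0:ℝ) ≤ 2 * V * ε)]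
      calc 2 * V * ε * |(1 - 4 * a * V + a ^ 2) * ε ^ 2 + (2 * a ^ 2 * V - 2 * a) * ε ^ 3
            + a ^ 2 * ε ^ 4| ≤ 2 * V * ε * (B * ε ^ 2) :=
              mul_le_mul_of_nonneg_left hNbound (by positivity)
        _ = 2 * V * B * ε ^ 3 := by ring
    have hsqbound : |x ^ 2 - y ^ 2| ≤ 2 * V * B * ε ^ 3 := by
      have h := congrArg abs hnum
      rw [abs_mul, abs_of_pos hD] at h
      calc |x ^ 2 - y ^ 2| ≤ |x ^ 2 - y ^ 2| * (1 + 2 * V * ε + ε ^ 2) :=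
            le_mul_of_one_le_right (abs_nonneg _) hD1
        _ ≤ 2 * V * B * ε ^ 3 := h ▸ hNabs
    -- conclude
    have hfinal : |x - y| * Real.sqrt ε ≤ 2 * V * B * ε ^ 3 := by
      calc |x - y| * Real.sqrt ε ≤ |x - y| * (x + y) := by
            exact mul_le_mul_of_nonneg_left (le_trans hxlb (by linarith)) (abs_nonneg _)
        _ = |x ^ 2 - y ^ 2| := habs
        _ ≤ 2 * V * B * ε ^ 3 := hsqbound
    have hdiv : |x - y| ≤ 2 * V * B * ε ^ 2 * Real.sqrt ε := by
      apply le_of_mul_le_mul_right _ hsε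
      calc |x - y| * Real.sqrt ε ≤ 2 * V * B * ε ^ 3 := hfinal
        _ = 2 * V * B * ε ^ 2 * Real.sqrt ε * Real.sqrt ε := by
            linear_combination (-(2 * V * B * ε ^ 2)) * hsεsq
    have h0 : (0:ℝ) ≤ ε ^ 2 * Real.sqrt ε := by positivity
    calc |x - y| ≤ 2 * V * B * ε ^ 2 * Real.sqrt ε := hdiv
      _ ≤ (2 * V * B + 1) * ε ^ 2 * Real.sqrt ε := by nlinarith
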